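/- Let P ⊂ ℚ² be a Kähler–Einstein Fano triangle of index k, i.e. P has weights (1,1,1) and k = [ℤ² : N_P] where N_P is the sublattice of ℤ² generated by the vertices of P. Then k is odd. -/
import Mathlib


abbrev Z2 := ℤ × ℤ
abbrev Q2 := ℚ × ℚ

/-- The canonical embedding of lattice points into `ℚ × ℚ`. -/
def toQ (v : Z2) : Q2 := ((v.1 : ℚ), (v.2 : ℚ))

/-- Pairing of a dual lattice vector with a rational point. -/
def dotQ (u : Z2) (x : Q2) : ℚ := (u.1 : ℚ) * x.1 + (u.2 : ℚ) * x.2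

/-- A lattice vector is primitive if its coordinates are coprime. -/
def IsPrimitive (v : Z2) : Prop := Int.gcd v.1 v.2 = 1

/-- Action of an integer matrix on `ℚ × ℚ`. -/
def applyM (G : Matrix (Fin 2) (Fin 2) ℤ) (x : Q2) : Q2 :=
  ((G 0 0 : ℚ) * x.1 + (G 0 1 : ℚ) * x.2, (G 1 0 : ℚ) * x.1 + (G 1 1 : ℚ) * x.2)

/-- Action of an integer matrix on `ℤ × ℤ`. -/
def applyZ (G : Matrix (Fin 2) (Fin 2) ℤ) (v : Z2) : Z2 :=
  (G 0 0 * v.1 + G 0 1 * v.2, G 1 0 * v.1 + G 1 1 * v.2)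

/-- The convex hull in `ℚ²` of a finite set of lattice points. -/
def hull (V : Finset Z2) : Set Q2 := convexHull ℚ (toQ '' (V : Set Z2))

/-- `V` is the vertex set of a Fano polygon: the origin is in the strict interior of the
convex hull, every vertex is primitive, and the points of `V` are exactly the vertices
(extreme points) of the hull. -/
def IsFanoPolygon (V : Finset Z2) : Prop :=
  (0 : Q2) ∈ interior (hull V) ∧
  (∀ v ∈ V, IsPrimitive v) ∧
  toQ '' (V : Set Z2) = Set.extremePoints ℚ (hull V)

/-- `E` is the edge of `P` with primitive inner normal `u` and height `h`:
`u ≥ -h` holds on `P`, with equality exactly on `E`, and `E` has more than one point. -/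
def IsEdge (P E : Set Q2) (u : Z2) (h : ℤ) : Prop :=
  IsPrimitive u ∧ 0 < h ∧
  (∀ x ∈ P, -(h : ℚ) ≤ dotQ u x) ∧
  E = {x ∈ P | dotQ u x = -(h : ℚ)} ∧
  ∃ a b, a ∈ E ∧ b ∈ E ∧ a ≠ b

/-- The lattice length of an edge: the number of lattice points on it minus one. -/
noncomputable def latticeLength (E : Set Q2) : ℕ :=
  Set.ncard {v : Z2 | toQ v ∈ E} - 1

/-- An edge is long if its lattice length is at least its height. -/
def IsLongEdge (P E : Set Q2) (u : Z2) (h : ℤ) : Prop :=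
  IsEdge P E u h ∧ h ≤ (latticeLength E : ℤ)

/-- `P` has a non-empty basket of R-singularities: some edge has lattice length
not a multiple of its height. -/
def HasRsing (P : Set Q2) : Prop :=
  ∃ E u h, IsEdge P E u h ∧ ¬ (h ∣ (latticeLength E : ℤ))

/-- Central symmetry: `P = -P`. -/
def CentSym (P : Set Q2) : Prop := ∀ x, x ∈ P ↔ -x ∈ P

/-- `G` is a lattice automorphism of `P`. -/
def IsAut (G : Matrix (Fin 2) (Fin 2) ℤ) (P : Set Q2) : Prop :=
  IsUnit G.det ∧ applyM G '' P = P

/-- `P` admits a lattice automorphism of order 3. -/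
def ThreeSym (P : Set Q2) : Prop := ∃ G, IsAut G P ∧ G ^ 3 = 1 ∧ G ≠ 1

/-- `P` is symmetric: the fixed-point set of its automorphism group is `{0}`. -/
def SymmetricPolygon (P : Set Q2) : Prop :=
  {x : Q2 | ∀ G, IsAut G P → applyM G x = x} = {0}

/-- The index of a Kähler–Einstein Fano triangle, i.e. the index in `ℤ²` of the sublattice
generated by its vertices, is odd. -/
lemma parity_lemma (a b c e : ℤ) (h0 : ¬ (2 ∣ a ∧ 2 ∣ b)) (h1 : ¬ (2 ∣ c ∧ 2 ∣ e))
    (h2 : ¬ (2 ∣ (a+c) ∧ 2 ∣ (b+e))) : ¬ (2 ∣ (a*e - b*c)) := by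
  have key : ∀ x : ℤ, (2:ℤ) ∣ x ↔ ((x : ZMod 2) = 0) := by
    intro x
    rw [ZMod.intCast_zmod_eq_zero_iff_dvd]
    norm_num
  simp only [key] at *
  push_cast at *
  revert h0 h1 h2
  generalize (a : ZMod 2) = A
  generalize (b : ZMod 2) = B
  generalize (c : ZMod 2) = C
  generalize (e : ZMod 2) = E
  revert A B C E
  decide

theorem stmt_4 (v₀ v₁ v₂ : Z2) (hcard : ({v₀, v₁, v₂} : Finset Z2).card = 3)
    (hF : IsFanoPolygon {v₀, v₁, v₂}) (hKE : v₀ + v₁ + v₂ = 0) (k : ℕ)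
    (hk : (Submodule.span ℤ ({v₀, v₁, v₂} : Set Z2)).toAddSubgroup.index = k) :
    Odd k := by
  obtain ⟨-, hprim, -⟩ := hF
  have np : ∀ v : Z2, IsPrimitive v → ¬(2 ∣ v.1 ∧ 2 ∣ v.2) := by
    rintro v hv ⟨ha, hb⟩
    have h2 := Int.dvd_gcd ha hb
    rw [show v.1.gcd v.2 = 1 from hv] at h2
    norm_num at h2
  have h0 := np v₀ (hprim v₀ (by simp))
  have h1 := np v₁ (hprim v₁ (by simp))
  have h2 := np v₂ (hprim v₂ (by simp))
  have e1 : v₂.1 = -(v₀.1 + v₁.1) := by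
    have := congrArg Prod.fst hKE
    simp [Prod.fst_add] at this
    omega
  have e2 : v₂.2 = -(v₀.2 + v₁.2) := by
    have := congrArg Prod.snd hKE
    simp [Prod.snd_add] at this
    omega
  rw [e1, e2] at h2
  have h2' : ¬(2 ∣ (v₀.1 + v₁.1) ∧ 2 ∣ (v₀.2 + v₁.2)) := by
    rw [Int.dvd_neg, Int.dvd_neg] at h2
    exact h2
  set d : ℤ := v₀.1 * v₁.2 - v₀.2 * v₁.1 with hd
  have hdodd : ¬ (2 ∣ d) := parity_lemma v₀.1 v₀.2 v₁.1 v₁.2 h0 h1 h2'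
  set H : Submodule ℤ Z2 := Submodule.span ℤ ({v₀, v₁, v₂} : Set Z2) with hH
  have hmem : ∀ x : Z2, (d * x.1, d * x.2) ∈ H := by
    intro x
    have heq : (d * x.1, d * x.2) =
        (v₁.2 * x.1 - v₁.1 * x.2) • v₀ + (v₀.1 * x.2 - v₀.2 * x.1) • v₁ := by
      simp only [Prod.ext_iff, Prod.smul_fst, Prod.smul_snd, Prod.fst_add, Prod.snd_add,
        smul_eq_mul, hd]
      constructor <;> ring
    rw [heq]
    exact H.add_mem
      (H.smul_mem _ (Submodule.subset_span (by simp)))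
      (H.smul_mem _ (Submodule.subset_span (by simp)))
  set K : AddSubgroup Z2 := (AddSubgroup.zmultiples d).prod (AddSubgroup.zmultiples d) with hK
  have hKH : K ≤ H.toAddSubgroup := by
    rintro ⟨x, y⟩ ⟨⟨m, hm⟩, ⟨n, hn⟩⟩
    simp only [smul_eq_mul] at hm hn
    rw [Submodule.mem_toAddSubgroup]
    have : (x, y) = m • ((d * 1, d * 0) : Z2) + n • ((d * 0, d * 1) : Z2) := by
      simp only [Prod.ext_iff, Prod.smul_fst, Prod.smul_snd, Prod.fst_add, Prod.snd_add,
        smul_eq_mul]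
      refine ⟨?_, ?_⟩
      · rw [← hm]; ring
      · rw [← hn]; ring
    rw [this]
    exact H.add_mem (H.smul_mem _ (hmem (1, 0))) (H.smul_mem _ (hmem (0, 1)))
  have hdvd : H.toAddSubgroup.index ∣ K.index := AddSubgroup.index_dvd_of_le hKH
  have hKidx : K.index = d.natAbs * d.natAbs := by
    simp [hK, Int.index_zmultiples]
  rw [hk, hKidx] at hdvd
  have hna : ¬ (2 ∣ d.natAbs) := by
    intro hc
    apply hdodd
    omega
  rcases Nat.even_or_odd k with he | ho
  · exact absurd ((Nat.prime_two.dvd_mul.mp ((even_iff_two_dvd.mp he).trans hdvd)).elim id id) hna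
  · exact ho
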